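/- The [[5,1,3]] graph code together with the decoder T corrects every single-qubit Pauli error with a distinct syndrome: there exist functions assigning to each error E in the 16-element set {id} ∪ {B_j, S_j, BS_j : j ∈ {1,…,5}} a syndrome string s_E ∈ {0,1}⁴ and a unitary u_E on ℂ², such that (i) for all c ∈ ℂ², T(E(f(c))) is a nonzero scalar multiple (the scalar independent of c) of |s_E⟩ ⊗ u_E(c(0)|0⟩ + c(1)|1⟩), and (ii) the sixteen syndrome strings s_E are pairwise distinct; consequently, measuring the four syndrome qubits identifies the error and applying u_E^{-1} to the data qubit recovers the original one-qubit state. -/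

import Mathlib

open scoped BigOperators

noncomputable section

/-- The 5-qubit state space `V₅ = (Fin 5 → Fin 2) → ℂ ≅ ℂ^32` with the standard
Hermitian inner product. -/
abbrev V5 : Type := EuclideanSpace ℂ (Fin 5 → Fin 2)

/-- The phase exponent `γ(x,y) = x(y₀+y₁+y₂) + y₀y₁ + y₀y₃ + y₁y₄ + y₂y₃ + y₂y₄ + y₃y₄`,
read modulo 2 via `(-1)^·`. -/
def gam (x : Fin 2) (y : Fin 5 → Fin 2) : ℕ :=
  x.val * ((y 0).val + (y 1).val + (y 2).val)
    + (y 0).val * (y 1).val + (y 0).val * (y 3).val + (y 1).val * (y 4).val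
    + (y 2).val * (y 3).val + (y 2).val * (y 4).val + (y 3).val * (y 4).val

/-- The graph-code encoding `f : ℂ² → V₅`, `f(c)(y) = Σ_x (−1)^{γ(x,y)} c(x)`
(normalization factors omitted). -/
def enc (c : Fin 2 → ℂ) : V5 := WithLp.toLp 2 (fun y => ∑ x : Fin 2, (-1 : ℂ) ^ gam x y * c x)

/-- The decoding phase exponent `θ`, with `z = (l₀, l₁, l₃, l₄, x̂)`. -/
def theta (y z : Fin 5 → Fin 2) : ℕ :=
  (z 4).val * ((y 0).val + (y 1).val + (y 2).val)
    + (y 0).val * (y 1).val + (y 0).val * (y 3).val + (y 1).val * (y 4).val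
    + (y 2).val * (y 3).val + (y 2).val * (y 4).val + (y 3).val * (y 4).val
    + (y 0).val * (z 0).val + (y 1).val * (z 1).val + (y 3).val * (z 2).val
    + (y 4).val * (z 3).val

/-- The graph decoding operator `T : V₅ → V₅`,
`T|y⟩ = Σ_{l₀l₁l₃l₄, x̂} (−1)^θ |l₀l₁l₃l₄x̂⟩`. -/
def dec (ψ : V5) : V5 := WithLp.toLp 2 (fun z => ∑ y : Fin 5 → Fin 2, (-1 : ℂ) ^ theta y z * ψ y)

/-- The product state `|s₀s₁s₂s₃⟩ ⊗ (a|0⟩ + b|1⟩)` in `V₅`: four syndrome qubits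
followed by one data qubit. -/
def synData (s : Fin 4 → Fin 2) (a b : ℂ) : V5 :=
  WithLp.toLp 2 (fun (y : Fin 5 → Fin 2) => (if y 0 = s 0 ∧ y 1 = s 1 ∧ y 2 = s 2 ∧ y 3 = s 3 then (1 : ℂ) else 0)
    * (if y 4 = 0 then a else b))

/-- Bit-flip (Pauli `σ_X`) on qubit `i` (0-indexed: qubit `j` of the paper is `i = j - 1`). -/
def bitFlip (i : Fin 5) (ψ : V5) : V5 := WithLp.toLp 2 (fun y => ψ (Function.update y i (1 - y i)))

/-- Phase-flip (Pauli `σ_Z`) on qubit `i` (0-indexed). -/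
def phaseFlip (i : Fin 5) (ψ : V5) : V5 := WithLp.toLp 2 (fun y => (-1 : ℂ) ^ (y i).val * ψ y)

/-- The 16-element error set `{id} ∪ {B_j, S_j, BS_j : j ∈ {1,…,5}}`:
`none` is the identity (no error); `some (j, 0)` is the bit-flip `B_{j+1}`,
`some (j, 1)` the phase-flip `S_{j+1}`, and `some (j, 2)` the combined flip
`BS_{j+1} = S_{j+1} ∘ B_{j+1}`. -/
def applyErr (e : Option (Fin 5 × Fin 3)) (ψ : V5) : V5 :=
  match e with
  | none => ψ
  | some (j, k) =>
      if k = 0 then bitFlip j ψ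
      else if k = 1 then phaseFlip j ψ
      else phaseFlip j (bitFlip j ψ)

/-! ### Auxiliary definitions for the proof -/

/-- Table of syndromes. -/
def synTab : Option (Fin 5 × Fin 3) → Fin 4 → Fin 2
  | none => ![0, 0, 0, 0]
  | some (j, k) =>
      ![![![0,1,1,0], ![1,0,0,0], ![1,1,1,0]],
        ![![1,0,0,1], ![0,1,0,0], ![1,1,0,1]],
        ![![0,0,1,1], ![1,1,0,0], ![1,1,1,1]],
        ![![0,1,0,1], ![0,0,1,0], ![0,1,1,1]],
        ![![1,0,1,0], ![0,0,0,1], ![1,0,1,1]]] j k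

/-- Table of recovery unitaries (integer entries). -/
def uZ : Option (Fin 5 × Fin 3) → Fin 2 → Fin 2 → ℤ
  | none => ![![1,0], ![0,1]]
  | some (j, k) =>
      ![![![![1,0],![0,-1]], ![![1,0],![0,1]], ![![1,0],![0,-1]]],
        ![![![1,0],![0,-1]], ![![1,0],![0,1]], ![![1,0],![0,-1]]],
        ![![![1,0],![0,-1]], ![![0,1],![1,0]], ![![0,-1],![1,0]]],
        ![![![0,1],![1,0]], ![![1,0],![0,1]], ![![0,1],![1,0]]],
        ![![![0,1],![1,0]], ![![1,0],![0,1]], ![![0,1],![1,0]]]] j k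

/-- The recovery unitaries as complex matrices. -/
def uMat (e : Option (Fin 5 × Fin 3)) : Matrix (Fin 2) (Fin 2) ℂ :=
  Matrix.of fun i j => ((uZ e i j : ℤ) : ℂ)

/-- The bit-flip part of an error. -/
def flipY (e : Option (Fin 5 × Fin 3)) (y : Fin 5 → Fin 2) : Fin 5 → Fin 2 :=
  match e with
  | none => y
  | some (j, k) => if k = 1 then y else Function.update y j (1 - y j)

/-- The phase part of an error. -/
def sgn (e : Option (Fin 5 × Fin 3)) (y : Fin 5 → Fin 2) : ℤ :=
  match e with
  | none => 1
  | some (j, k) => if k = 0 then 1 else (-1) ^ (y j).val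

lemma applyErr_enc (e : Option (Fin 5 × Fin 3)) (c : Fin 2 → ℂ) :
    applyErr e (enc c) = WithLp.toLp 2 (fun y => ((sgn e y : ℤ) : ℂ) * enc c (flipY e y)) := by
  ext y
  rcases e with _ | ⟨j, k⟩
  · simp [applyErr, sgn, flipY, PiLp.toLp_apply]
  · fin_cases k <;>
      simp [applyErr, sgn, flipY, bitFlip, phaseFlip, PiLp.toLp_apply] <;> push_cast <;> ring

/-- Integer coefficient of `c x` in `dec (applyErr e (enc c)) z`. -/
def Cz (e : Option (Fin 5 × Fin 3)) (z : Fin 5 → Fin 2) (x : Fin 2) : ℤ :=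
  ∑ y : Fin 5 → Fin 2, (-1) ^ theta y z * sgn e y * (-1) ^ gam x (flipY e y)

lemma dec_apply (e : Option (Fin 5 × Fin 3)) (c : Fin 2 → ℂ) (z : Fin 5 → Fin 2) :
    dec (applyErr e (enc c)) z = ∑ x : Fin 2, ((Cz e z x : ℤ) : ℂ) * c x := by
  rw [applyErr_enc e c]
  simp only [dec, applyErr_enc e c, enc, Cz, PiLp.toLp_apply]
  push_cast
  simp only [Finset.mul_sum]
  rw [Finset.sum_comm]
  refine Finset.sum_congr rfl fun x _ => ?_
  rw [Finset.sum_mul]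
  refine Finset.sum_congr rfl fun y _ => ?_
  ring

set_option maxHeartbeats 4000000 in
lemma key : ∀ (e : Option (Fin 5 × Fin 3)) (z : Fin 5 → Fin 2) (x : Fin 2),
    Cz e z x = 32 * (if z 0 = synTab e 0 ∧ z 1 = synTab e 1 ∧ z 2 = synTab e 2 ∧
        z 3 = synTab e 3 then uZ e (z 4) x else 0) := by
  decide

set_option maxHeartbeats 1000000 in
/-- **Table 1.** The `[[5,1,3]]` graph code with decoder `T` corrects every single-qubit
Pauli error with a distinct syndrome: there are a syndrome string `s_E ∈ {0,1}⁴` and a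
unitary `u_E` on `ℂ²` for each error `E` in the 16-element set
`{id} ∪ {B_j, S_j, BS_j}`, such that the sixteen syndromes are pairwise distinct and for
all `c`, `T(E(f(c)))` is a nonzero scalar multiple (scalar independent of `c`) of
`|s_E⟩ ⊗ u_E(c(0)|0⟩ + c(1)|1⟩)`. Hence measuring the syndrome qubits identifies the
error and applying `u_E⁻¹` to the data qubit recovers the original one-qubit state. -/
theorem table_of_syndromes :
    ∃ (s : Option (Fin 5 × Fin 3) → (Fin 4 → Fin 2))
      (u : Option (Fin 5 × Fin 3) → Matrix (Fin 2) (Fin 2) ℂ),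
      Function.Injective s ∧
      (∀ e, u e ∈ Matrix.unitaryGroup (Fin 2) ℂ) ∧
      ∀ e, ∃ α : ℂ, α ≠ 0 ∧ ∀ c : Fin 2 → ℂ,
        dec (applyErr e (enc c)) =
          α • synData (s e) ((u e).mulVec c 0) ((u e).mulVec c 1) := by
  have hZ : ∀ (e : Option (Fin 5 × Fin 3)) (i j : Fin 2),
      (∑ k : Fin 2, uZ e i k * uZ e j k) = if i = j then (1 : ℤ) else 0 := by decide
  refine ⟨synTab, uMat, by decide, ?_, ?_⟩
  · intro e
    rw [Matrix.mem_unitaryGroup_iff]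
    ext i j
    rw [Matrix.mul_apply]
    have h1 : ∀ k, uMat e i k * star (uMat e) k j = ((uZ e i k * uZ e j k : ℤ) : ℂ) := by
      intro k
      simp [uMat, Matrix.star_apply, star_intCast]
    rw [Finset.sum_congr rfl fun k _ => h1 k, ← Int.cast_sum, hZ e i j]
    simp only [Matrix.one_apply]
    split_ifs <;> simp
  · intro e
    refine ⟨32, by norm_num, fun c => ?_⟩
    ext z
    rw [dec_apply]
    have hk := fun x => key e z x
    simp only [PiLp.smul_apply, smul_eq_mul, synData, PiLp.toLp_apply]
    by_cases hs : z 0 = synTab e 0 ∧ z 1 = synTab e 1 ∧ z 2 = synTab e 2 ∧ z 3 = synTab e 3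
    · simp only [if_pos hs] at hk ⊢
      have h4 : z 4 = 0 ∨ z 4 = 1 := by
        rcases h : z 4 with ⟨(_ | _ | v), hl⟩
        · exact Or.inl rfl
        · exact Or.inr rfl
        · omega
      rcases h4 with h4 | h4 <;>
      · simp only [h4, if_pos, if_neg, Fin.sum_univ_two, Matrix.mulVec, dotProduct,
          uMat, Matrix.of_apply, reduceIte] at hk ⊢
        rw [hk 0, hk 1]
        push_cast
        simp only [h4] at *
        ring
    · simp only [if_neg hs, mul_zero, zero_mul] at hk ⊢
      simp [hk]
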